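/- If L₀ and L₁ are m × n-weaves in T² × I, both in standard position, whose weaving diagrams coincide (for all i ∈ {1,…,m} and j ∈ {1,…,n}, the i-th warp of L₀ is above the j-th weft of L₀ if and only if the i-th warp of L₁ is above the j-th weft of L₁), then L₀ and L₁ are isotopic links in T² × I. -/

import Mathlib

noncomputable section

open unitInterval Topology

/-- The circle `S¹ = ℝ/ℤ`. -/
abbrev S1 : Type := AddCircle (1 : ℝ)

/-- The thickened torus `T² × I`. -/
abbrev Thick : Type := S1 × S1 × I

/-- Projection to the first `S¹`-coordinate. -/
def p1 (q : Thick) : S1 := q.1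

/-- Projection to the second `S¹`-coordinate. -/
def p2 (q : Thick) : S1 := q.2.1

/-- Projection to the `I`-coordinate, as a real number. -/
def p3 (q : Thick) : ℝ := (q.2.2 : ℝ)

/-- A warp: image of an embedding of the circle into the interior of `T² × I`
with constant first coordinate whose second coordinate is a homeomorphism. -/
def IsWarp (K : Set Thick) : Prop :=
  ∃ ι : S1 → Thick, IsEmbedding ι ∧ Set.range ι = K ∧
    (∀ s, p3 (ι s) ∈ Set.Ioo (0:ℝ) 1) ∧
    (∃ x : S1, ∀ s, p1 (ι s) = x) ∧
    IsHomeomorph (fun s => p2 (ι s))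

/-- A weft: image of an embedding of the circle into the interior of `T² × I`
with constant second coordinate whose first coordinate is a homeomorphism. -/
def IsWeft (K : Set Thick) : Prop :=
  ∃ ι : S1 → Thick, IsEmbedding ι ∧ Set.range ι = K ∧
    (∀ s, p3 (ι s) ∈ Set.Ioo (0:ℝ) 1) ∧
    (∃ y : S1, ∀ s, p2 (ι s) = y) ∧
    IsHomeomorph (fun s => p1 (ι s))

/-- An `m × n`-weave: a disjoint union of `m` warps and `n` wefts in `T² × I`. -/
structure Weave (m n : ℕ) where
  warp : Fin m → Set Thick
  weft : Fin n → Set Thick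
  warp_isWarp : ∀ i, IsWarp (warp i)
  weft_isWeft : ∀ j, IsWeft (weft j)
  disj : Pairwise (Function.onFun Disjoint (Sum.elim warp weft))

/-- The underlying link (subset of `T² × I`) of a weave. -/
def Weave.carrier {m n : ℕ} (W : Weave m n) : Set Thick :=
  (⋃ i, W.warp i) ∪ ⋃ j, W.weft j

/-- A subset of `T² × I` is a weave if it is the carrier of some `m × n`-weave. -/
def IsWeaveSet (L : Set Thick) : Prop :=
  ∃ (m n : ℕ) (W : Weave m n), W.carrier = L

/-- `F : (T² × I) × [0,1] → T² × I` is an ambient isotopy from `L₀` to `L₁`. -/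
def IsAmbientIsotopy (F : Thick × I → Thick) (L0 L1 : Set Thick) : Prop :=
  Continuous F ∧ (∀ t : I, IsHomeomorph (fun q => F (q, t))) ∧
    (∀ q, F (q, 0) = q) ∧ (fun q => F (q, 1)) '' L0 = L1

/-- Two links in `T² × I` are isotopic. -/
def Isotopic (L0 L1 : Set Thick) : Prop :=
  ∃ F : Thick × I → Thick, IsAmbientIsotopy F L0 L1

/-- The warp `K` is above the weft `K'`: at the (unique) crossing the point of `K`
has larger third coordinate. -/
def Above (K K' : Set Thick) : Prop :=
  ∃ q ∈ K, ∃ q' ∈ K', p1 q' = p1 q ∧ p2 q = p2 q' ∧ p3 q' < p3 q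

/-- Two warps of a weave are comparable with respect to the wefts:
one crossing function is pointwise ≤ the other. -/
def ComparableWarps {m n : ℕ} (W : Weave m n) (i i' : Fin m) : Prop :=
  (∀ j, Above (W.warp i) (W.weft j) → Above (W.warp i') (W.weft j)) ∨
  (∀ j, Above (W.warp i') (W.weft j) → Above (W.warp i) (W.weft j))

/-- A weave is in standard position if the `i`-th warp has first coordinate
`(2i-1)/2m` and the `j`-th weft has second coordinate `(2j-1)/2n` (0-indexed:
`(2i+1)/2m`). -/
def StdPos {m n : ℕ} (W : Weave m n) : Prop :=
  (∀ i : Fin m, ∀ q ∈ W.warp i,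
      p1 q = ((((2 * (i : ℕ) + 1 : ℝ)) / (2 * (m : ℝ)) : ℝ) : S1)) ∧
  (∀ j : Fin n, ∀ q ∈ W.weft j,
      p2 q = ((((2 * (j : ℕ) + 1 : ℝ)) / (2 * (n : ℝ)) : ℝ) : S1))



open Set

/-- clamp to [0,1] -/
def clamp01 (t : ℝ) : ℝ := max 0 (min 1 t)

lemma clamp01_mem (t : ℝ) : clamp01 t ∈ Icc (0:ℝ) 1 :=
  ⟨le_max_left _ _, max_le (by norm_num) (min_le_left _ _)⟩

lemma clamp01_of_mem {t : ℝ} (h : t ∈ Icc (0:ℝ) 1) : clamp01 t = t := by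
  simp only [clamp01, min_eq_right h.2, max_eq_right h.1]

lemma continuous_clamp01 : Continuous clamp01 :=
  continuous_const.max (continuous_const.min continuous_id)

/-- linear blend with clamped time -/
def bl (a b t : ℝ) : ℝ := (1 - clamp01 t) * a + clamp01 t * b

lemma bl_zero (a b : ℝ) : bl a b 0 = a := by
  simp [bl, clamp01_of_mem (by norm_num : (0:ℝ) ∈ Icc (0:ℝ) 1)]

lemma bl_one (a b : ℝ) : bl a b 1 = b := by
  simp [bl, clamp01_of_mem (by norm_num : (1:ℝ) ∈ Icc (0:ℝ) 1)]

lemma bl_mem {a b : ℝ} (ha : a ∈ Ioo (0:ℝ) 1) (hb : b ∈ Ioo (0:ℝ) 1) (t : ℝ) :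
    bl a b t ∈ Ioo (0:ℝ) 1 := by
  obtain ⟨ht0, ht1⟩ := clamp01_mem t
  set s := clamp01 t with hs
  have hmin : (0:ℝ) < min a b := lt_min ha.1 hb.1
  have hmax : max a b < 1 := max_lt ha.2 hb.2
  have k1 : (1 - s) * min a b ≤ (1 - s) * a :=
    mul_le_mul_of_nonneg_left (min_le_left _ _) (by linarith)
  have k2 : s * min a b ≤ s * b := mul_le_mul_of_nonneg_left (min_le_right _ _) ht0
  have k3 : (1 - s) * a ≤ (1 - s) * max a b :=
    mul_le_mul_of_nonneg_left (le_max_left _ _) (by linarith)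
  have k4 : s * b ≤ s * max a b := mul_le_mul_of_nonneg_left (le_max_right _ _) ht0
  constructor <;> simp only [bl, ← hs] <;> nlinarith

lemma bl_lt {a b c d : ℝ} (hab : a < b) (hcd : c < d) (t : ℝ) :
    bl a c t < bl b d t := by
  obtain ⟨ht0, ht1⟩ := clamp01_mem t
  set s := clamp01 t with hs
  have hmin : (0:ℝ) < min (b - a) (d - c) := lt_min (by linarith) (by linarith)
  have k1 : (1 - s) * min (b-a) (d-c) ≤ (1 - s) * (b - a) :=
    mul_le_mul_of_nonneg_left (min_le_left _ _) (by linarith)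
  have k2 : s * min (b-a) (d-c) ≤ s * (d - c) :=
    mul_le_mul_of_nonneg_left (min_le_right _ _) ht0
  simp only [bl, ← hs]
  nlinarith

lemma bl_self (a t : ℝ) : bl a a t = a := by simp only [bl]; ring

lemma continuous_bl {X : Type*} [TopologicalSpace X] {a b t : X → ℝ}
    (ha : Continuous a) (hb : Continuous b) (ht : Continuous t) :
    Continuous fun x => bl (a x) (b x) (t x) :=
  ((continuous_const.sub (continuous_clamp01.comp ht)).mul ha).add
    ((continuous_clamp01.comp ht).mul hb)


open Set Real

set_option linter.unusedSectionVars false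

lemma continuousAt_if_le {X : Type*} [TopologicalSpace X] {f g f' g' : X → ℝ} {x : X}
    (hf' : ContinuousAt f' x) (hg' : ContinuousAt g' x)
    (hf : ContinuousAt f x) (hg : ContinuousAt g x)
    (heq : f x = g x → f' x = g' x) :
    ContinuousAt (fun y => if f y ≤ g y then f' y else g' y) x := by
  rcases lt_trichotomy (f x) (g x) with hlt | he | hgt
  · have hev : ∀ᶠ y in nhds x, f y < g y := hf.eventually_lt hg hlt
    have : (fun y => if f y ≤ g y then f' y else g' y) =ᶠ[nhds x] f' := by
      filter_upwards [hev] with y hy; simp [hy.le]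
    exact hf'.congr this.symm
  · have key : Filter.Tendsto (fun y => if f y ≤ g y then f' y else g' y)
        (nhds x) (nhds (f' x)) := by
      rw [Filter.tendsto_def]
      intro s hs
      have h1 := Filter.tendsto_def.1 hf' s hs
      have h2 := Filter.tendsto_def.1 hg' s (by rw [← heq he]; exact hs)
      filter_upwards [h1, h2] with y hy1 hy2
      by_cases hc : f y ≤ g y <;> simp only [Set.mem_preimage, hc, if_true, if_false] <;>
        [exact hy1; exact hy2]
    have hval : (fun y => if f y ≤ g y then f' y else g' y) x = f' x := by simp [he.le]
    unfold ContinuousAt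
    rw [hval]
    exact key
  · have hev : ∀ᶠ y in nhds x, g y < f y := hg.eventually_lt hf hgt
    have : (fun y => if f y ≤ g y then f' y else g' y) =ᶠ[nhds x] g' := by
      filter_upwards [hev] with y hy; simp [not_le.2 hy]
    exact hg'.congr this.symm

/-- one-pair homeomorphism of `[0,1]` sending `a ↦ b`. -/
def mov1 (a b z : ℝ) : ℝ := z ^ (Real.log b / Real.log a)

section mov1
variable {a b : ℝ} (ha : a ∈ Ioo (0:ℝ) 1) (hb : b ∈ Ioo (0:ℝ) 1)
include ha hb

lemma mov1_exp_pos : 0 < Real.log b / Real.log a :=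
  div_pos_of_neg_of_neg (Real.log_neg hb.1 hb.2) (Real.log_neg ha.1 ha.2)

lemma mov1_zero : mov1 a b 0 = 0 :=
  Real.zero_rpow (ne_of_gt (mov1_exp_pos ha hb))

lemma mov1_one : mov1 a b 1 = 1 := Real.one_rpow _

lemma mov1_self : mov1 a b a = b := by
  have hla : Real.log a ≠ 0 := ne_of_lt (Real.log_neg ha.1 ha.2)
  have h : Real.log a * (Real.log b / Real.log a) = Real.log b := by field_simp
  rw [mov1, Real.rpow_def_of_pos ha.1, h, Real.exp_log hb.1]

lemma mov1_strictMonoOn : StrictMonoOn (mov1 a b) (Icc (0:ℝ) 1) := by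
  intro z1 h1 z2 _ hlt
  exact Real.rpow_lt_rpow h1.1 hlt (mov1_exp_pos ha hb)

end mov1

lemma mov1_id {a : ℝ} (ha : a ∈ Ioo (0:ℝ) 1) (z : ℝ) : mov1 a a z = z := by
  have hla : Real.log a ≠ 0 := ne_of_lt (Real.log_neg ha.1 ha.2)
  rw [mov1, div_self hla, Real.rpow_one]

lemma mov1_continuousAt {X : Type*} [TopologicalSpace X] {a b z : X → ℝ} {x : X}
    (ca : ContinuousAt a x) (cb : ContinuousAt b x) (cz : ContinuousAt z x)
    (ha : a x ∈ Ioo (0:ℝ) 1) (hb : b x ∈ Ioo (0:ℝ) 1) :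
    ContinuousAt (fun y => mov1 (a y) (b y) (z y)) x := by
  have hla : Real.log (a x) ≠ 0 := ne_of_lt (Real.log_neg ha.1 ha.2)
  have cla : ContinuousAt (fun y => Real.log (a y)) x := ca.log (ne_of_gt ha.1)
  have clb : ContinuousAt (fun y => Real.log (b y)) x := cb.log (ne_of_gt hb.1)
  exact cz.rpow (clb.div cla hla) (Or.inr (mov1_exp_pos ha hb))

/-- two-pair homeomorphism of `[0,1]` sending `A ↦ B` and `A' ↦ B'` (for `A < A'`, `B < B'`). -/
def mov2 (A B A' B' z : ℝ) : ℝ :=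
  if z ≤ A' then B' * (z / A') ^ (Real.log (B / B') / Real.log (A / A'))
  else B' + (z - A') * (1 - B') / (1 - A')

section mov2
variable {A B A' B' : ℝ} (hA : 0 < A) (hAA : A < A') (hA1 : A' < 1)
  (hB : 0 < B) (hBB : B < B') (hB1 : B' < 1)
include hA hAA hA1 hB hBB hB1

lemma mov2_exp_pos : 0 < Real.log (B / B') / Real.log (A / A') := by
  have h1 : Real.log (B / B') < 0 :=
    Real.log_neg (div_pos hB (by linarith)) ((div_lt_one (by linarith)).2 hBB)
  have h2 : Real.log (A / A') < 0 :=
    Real.log_neg (div_pos hA (by linarith)) ((div_lt_one (by linarith)).2 hAA)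
  exact div_pos_of_neg_of_neg h1 h2

lemma mov2_zero : mov2 A B A' B' 0 = 0 := by
  rw [mov2, if_pos (by linarith), zero_div,
    Real.zero_rpow (ne_of_gt (mov2_exp_pos hA hAA hA1 hB hBB hB1)), mul_zero]

lemma mov2_one : mov2 A B A' B' 1 = 1 := by
  have hne : (1:ℝ) - A' ≠ 0 := by linarith
  rw [mov2, if_neg (by push_neg; linarith)]
  field_simp
  ring

lemma mov2_fst : mov2 A B A' B' A = B := by
  have hA'pos : (0:ℝ) < A' := by linarith
  rw [mov2, if_pos hAA.le, Real.rpow_def_of_pos (div_pos hA hA'pos)]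
  have h2 : Real.log (A / A') ≠ 0 :=
    ne_of_lt (Real.log_neg (div_pos hA hA'pos) ((div_lt_one hA'pos).2 hAA))
  have h : Real.log (A / A') * (Real.log (B / B') / Real.log (A / A')) = Real.log (B / B') := by
    field_simp
  rw [h, Real.exp_log (div_pos hB (by linarith)), mul_comm,
    div_mul_cancel₀ _ (by linarith : B' ≠ 0)]

lemma mov2_snd : mov2 A B A' B' A' = B' := by
  rw [mov2, if_pos le_rfl, div_self (by linarith : A' ≠ 0), Real.one_rpow, mul_one]

lemma mov2_strictMonoOn : StrictMonoOn (mov2 A B A' B') (Icc (0:ℝ) 1) := by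
  have hA'pos : (0:ℝ) < A' := by linarith
  have hB'pos : (0:ℝ) < B' := by linarith
  have hE := mov2_exp_pos hA hAA hA1 hB hBB hB1
  intro z1 h1 z2 h2 hlt
  rcases le_or_gt z1 A' with hz1 | hz1 <;> rcases le_or_gt z2 A' with hz2 | hz2
  · rw [mov2, if_pos hz1, mov2, if_pos hz2]
    have hdiv : z1 / A' < z2 / A' := by
      rw [div_lt_div_iff_of_pos_right hA'pos]; exact hlt
    have hr : (z1/A') ^ (Real.log (B / B') / Real.log (A / A'))
        < (z2/A') ^ (Real.log (B / B') / Real.log (A / A')) :=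
      Real.rpow_lt_rpow (div_nonneg h1.1 hA'pos.le) hdiv hE
    exact mul_lt_mul_of_pos_left hr hB'pos
  · rw [mov2, if_pos hz1, mov2, if_neg (not_le.2 hz2)]
    have k1 : (z1 / A') ^ (Real.log (B / B') / Real.log (A / A')) ≤ 1 :=
      Real.rpow_le_one (div_nonneg h1.1 hA'pos.le) ((div_le_one hA'pos).2 hz1) hE.le
    have k2 : 0 < (z2 - A') * (1 - B') / (1 - A') :=
      div_pos (mul_pos (by linarith) (by linarith)) (by linarith)
    nlinarith
  · linarith
  · rw [mov2, if_neg (not_le.2 hz1), mov2, if_neg (not_le.2 hz2)]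
    have k : (z1 - A') * (1 - B') < (z2 - A') * (1 - B') := by nlinarith
    have k2 : (z1 - A') * (1 - B') / (1 - A') < (z2 - A') * (1 - B') / (1 - A') := by
      rw [div_lt_div_iff_of_pos_right (by linarith : (0:ℝ) < 1 - A')]; exact k
    linarith

end mov2

lemma mov2_id {A A' : ℝ} (hA : 0 < A) (hAA : A < A') (hA1 : A' < 1) (z : ℝ) :
    mov2 A A A' A' z = z := by
  have hA'pos : (0:ℝ) < A' := by linarith
  have h2 : Real.log (A / A') ≠ 0 :=
    ne_of_lt (Real.log_neg (div_pos hA hA'pos) ((div_lt_one hA'pos).2 hAA))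
  rw [mov2]
  split_ifs with h
  · rw [div_self h2, Real.rpow_one, mul_div_cancel₀ _ (by linarith : A' ≠ 0)]
  · have hne : (1:ℝ) - A' ≠ 0 := by linarith
    field_simp
    ring

lemma mov2_continuousAt {X : Type*} [TopologicalSpace X] {A B A' B' z : X → ℝ} {x : X}
    (cA : ContinuousAt A x) (cB : ContinuousAt B x) (cA' : ContinuousAt A' x)
    (cB' : ContinuousAt B' x) (cz : ContinuousAt z x)
    (hA : 0 < A x) (hAA : A x < A' x) (hA1 : A' x < 1)
    (hB : 0 < B x) (hBB : B x < B' x) (hB1 : B' x < 1) :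
    ContinuousAt (fun y => mov2 (A y) (B y) (A' y) (B' y) (z y)) x := by
  have hA'pos : (0:ℝ) < A' x := by linarith
  have hB'pos : (0:ℝ) < B' x := by linarith
  have hE := mov2_exp_pos hA hAA hA1 hB hBB hB1
  have hlogA : Real.log (A x / A' x) ≠ 0 :=
    ne_of_lt (Real.log_neg (div_pos hA hA'pos) ((div_lt_one hA'pos).2 hAA))
  have c1 : ContinuousAt (fun y => Real.log (A y / A' y)) x :=
    (cA.div cA' (ne_of_gt hA'pos)).log (ne_of_gt (div_pos hA hA'pos))
  have c2 : ContinuousAt (fun y => Real.log (B y / B' y)) x :=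
    (cB.div cB' (ne_of_gt hB'pos)).log (ne_of_gt (div_pos hB hB'pos))
  have cbr1 : ContinuousAt
      (fun y => B' y * (z y / A' y) ^ (Real.log (B y / B' y) / Real.log (A y / A' y))) x :=
    cB'.mul ((cz.div cA' (ne_of_gt hA'pos)).rpow (c2.div c1 hlogA) (Or.inr hE))
  have cbr2 : ContinuousAt (fun y => B' y + (z y - A' y) * (1 - B' y) / (1 - A' y)) x :=
    cB'.add (((cz.sub cA').mul (continuousAt_const.sub cB')).div
      (continuousAt_const.sub cA') (by intro h; apply absurd h; intro h2; linarith))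
  exact continuousAt_if_le cbr1 cbr2 cz cA' (fun h => by
    rw [h, div_self (ne_of_gt hA'pos), Real.one_rpow, mul_one, sub_self, zero_mul,
      zero_div, add_zero])
/-- The graph of a warp height function. -/
def grW (x : S1) (h : S1 → ℝ) : Set Thick := {q | q.1 = x ∧ (q.2.2 : ℝ) = h q.2.1}

/-- The graph of a weft height function. -/
def grF (y : S1) (g : S1 → ℝ) : Set Thick := {q | q.2.1 = y ∧ (q.2.2 : ℝ) = g q.1}

lemma isWarp_graph {K : Set Thick} (hK : IsWarp K) {x : S1} (hx : ∀ q ∈ K, p1 q = x) :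
    ∃ h : S1 → ℝ, Continuous h ∧ (∀ y, h y ∈ Set.Ioo (0:ℝ) 1) ∧ K = grW x h := by
  obtain ⟨em, hemb, hrange, hIoo, ⟨x₀, hx₀⟩, hp2⟩ := hK
  have hx₀x : x₀ = x := by
    rw [← hx₀ 0]; exact hx (em 0) (hrange ▸ Set.mem_range_self 0)
  subst hx₀x
  let sg : S1 ≃ₜ S1 := hp2.homeomorph
  have hsg : ∀ s, sg s = p2 (em s) := fun _ => rfl
  refine ⟨fun y => p3 (em (sg.symm y)), ?_, fun y => hIoo _, ?_⟩
  · exact (continuous_subtype_val.comp (continuous_snd.comp continuous_snd)).comp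
      (hemb.continuous.comp sg.symm.continuous)
  · ext q
    constructor
    · rintro hq
      rw [← hrange] at hq
      obtain ⟨s, rfl⟩ := hq
      refine ⟨hx₀ s, ?_⟩
      have : sg.symm (p2 (em s)) = s := by rw [← hsg]; exact sg.symm_apply_apply s
      show p3 (em s) = p3 (em (sg.symm ((em s).2.1)))
      rw [show (em s).2.1 = p2 (em s) from rfl, this]
    · rintro ⟨hq1, hq2⟩
      rw [← hrange]
      refine ⟨sg.symm q.2.1, ?_⟩
      have h2 : p2 (em (sg.symm q.2.1)) = q.2.1 := by
        rw [← hsg]; exact sg.apply_symm_apply _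
      have h1 : p1 (em (sg.symm q.2.1)) = q.1 := by rw [hx₀, hq1]
      refine Prod.ext h1 (Prod.ext h2 (Subtype.ext ?_))
      exact hq2.symm

lemma isWeft_graph {K : Set Thick} (hK : IsWeft K) {y : S1} (hy : ∀ q ∈ K, p2 q = y) :
    ∃ g : S1 → ℝ, Continuous g ∧ (∀ x, g x ∈ Set.Ioo (0:ℝ) 1) ∧ K = grF y g := by
  obtain ⟨em, hemb, hrange, hIoo, ⟨y₀, hy₀⟩, hp1⟩ := hK
  have hy₀y : y₀ = y := by
    rw [← hy₀ 0]; exact hy (em 0) (hrange ▸ Set.mem_range_self 0)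
  subst hy₀y
  let sg : S1 ≃ₜ S1 := hp1.homeomorph
  have hsg : ∀ s, sg s = p1 (em s) := fun _ => rfl
  refine ⟨fun x => p3 (em (sg.symm x)), ?_, fun x => hIoo _, ?_⟩
  · exact (continuous_subtype_val.comp (continuous_snd.comp continuous_snd)).comp
      (hemb.continuous.comp sg.symm.continuous)
  · ext q
    constructor
    · rintro hq
      rw [← hrange] at hq
      obtain ⟨s, rfl⟩ := hq
      refine ⟨hy₀ s, ?_⟩
      have : sg.symm (p1 (em s)) = s := by rw [← hsg]; exact sg.symm_apply_apply s
      show p3 (em s) = p3 (em (sg.symm ((em s).1)))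
      rw [show (em s).1 = p1 (em s) from rfl, this]
    · rintro ⟨hq1, hq2⟩
      rw [← hrange]
      refine ⟨sg.symm q.1, ?_⟩
      have h1 : p1 (em (sg.symm q.1)) = q.1 := by
        rw [← hsg]; exact sg.apply_symm_apply _
      have h2 : p2 (em (sg.symm q.1)) = q.2.1 := by rw [hy₀, hq1]
      refine Prod.ext h1 (Prod.ext h2 (Subtype.ext ?_))
      exact hq2.symm

lemma above_gr {x y : S1} {h g : S1 → ℝ} (hh : ∀ y', h y' ∈ Set.Ioo (0:ℝ) 1)
    (hg : ∀ x', g x' ∈ Set.Ioo (0:ℝ) 1) :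
    Above (grW x h) (grF y g) ↔ g x < h y := by
  constructor
  · rintro ⟨q, ⟨hq1, hq2⟩, q', ⟨hq'1, hq'2⟩, e1, e2, e3⟩
    simp only [p1, p2, p3] at e1 e2 e3
    rw [hq2, hq'2] at e3
    rw [e1, hq1, e2, hq'1] at e3
    exact e3
  · intro hlt
    refine ⟨(x, y, ⟨h y, Set.Ioo_subset_Icc_self (hh y)⟩), ⟨rfl, rfl⟩,
      (x, y, ⟨g x, Set.Ioo_subset_Icc_self (hg x)⟩), ⟨rfl, rfl⟩, rfl, rfl, hlt⟩
section MainConstruction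

open Set

attribute [local instance] Classical.propDecidable

variable {m n : ℕ} (xs : Fin m → S1) (ys : Fin n → S1)
  (h0 h1 : Fin m → S1 → ℝ) (g0 g1 : Fin n → S1 → ℝ)

/-- crossing sign: warp `i` above weft `j` in the initial weave -/
def cAb (i : Fin m) (j : Fin n) : Prop := g0 j (xs i) < h0 i (ys j)

/-- index type for the open cover of the torus -/
abbrev Idx (m n : ℕ) := Option (Fin m ⊕ Fin n ⊕ Fin m × Fin n)

/-- set of points avoiding the warp lines indexed by `S` -/
def NoX (S : Set (Fin m)) : Set (S1 × S1) := {p | ∀ i ∈ S, p.1 ≠ xs i}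

/-- set of points avoiding the weft lines indexed by `T` -/
def NoY (T : Set (Fin n)) : Set (S1 × S1) := {p | ∀ j ∈ T, p.2 ≠ ys j}

/-- neighbourhood of the crossing `(i,j)` where strand order is constant -/
def Vc (i : Fin m) (j : Fin n) : Set (S1 × S1) :=
  if cAb xs ys h0 g0 i j
  then {p | g0 j p.1 < h0 i p.2} ∩ {p | g1 j p.1 < h1 i p.2}
  else {p | h0 i p.2 < g0 j p.1} ∩ {p | h1 i p.2 < g1 j p.1}

/-- the open cover of the torus -/
def Ucov : Idx m n → Set (S1 × S1)
  | none => NoX xs Set.univ ∩ NoY ys Set.univ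
  | some (Sum.inl i) => NoX xs {i}ᶜ ∩ NoY ys Set.univ
  | some (Sum.inr (Sum.inl j)) => NoX xs Set.univ ∩ NoY ys {j}ᶜ
  | some (Sum.inr (Sum.inr (i, j))) =>
      (NoX xs {i}ᶜ ∩ NoY ys {j}ᶜ) ∩ Vc xs ys h0 h1 g0 g1 i j

/-- the local fiberwise solutions -/
def sol : Idx m n → (S1 × S1) → ℝ → ℝ → ℝ
  | none => fun _ _ z => z
  | some (Sum.inl i) => fun p t z => mov1 (h0 i p.2) (bl (h0 i p.2) (h1 i p.2) t) z
  | some (Sum.inr (Sum.inl j)) => fun p t z => mov1 (g0 j p.1) (bl (g0 j p.1) (g1 j p.1) t) z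
  | some (Sum.inr (Sum.inr (i, j))) => fun p t z =>
      if cAb xs ys h0 g0 i j
      then mov2 (g0 j p.1) (bl (g0 j p.1) (g1 j p.1) t) (h0 i p.2) (bl (h0 i p.2) (h1 i p.2) t) z
      else mov2 (h0 i p.2) (bl (h0 i p.2) (h1 i p.2) t) (g0 j p.1) (bl (g0 j p.1) (g1 j p.1) t) z

lemma NoX_isOpen (S : Set (Fin m)) : IsOpen (NoX xs S) := by
  have : NoX xs S = ⋂ i ∈ S, {p : S1 × S1 | p.1 ≠ xs i} := by
    ext p; simp [NoX]
  rw [this]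
  exact (Set.toFinite S).isOpen_biInter fun i _ => isOpen_ne.preimage continuous_fst

lemma NoY_isOpen (T : Set (Fin n)) : IsOpen (NoY ys T) := by
  have : NoY ys T = ⋂ j ∈ T, {p : S1 × S1 | p.2 ≠ ys j} := by
    ext p; simp [NoY]
  rw [this]
  exact (Set.toFinite T).isOpen_biInter fun j _ => isOpen_ne.preimage continuous_snd

lemma Vc_isOpen (Hh0 : ∀ i, Continuous (h0 i)) (Hh1 : ∀ i, Continuous (h1 i))
    (Hg0 : ∀ j, Continuous (g0 j)) (Hg1 : ∀ j, Continuous (g1 j)) (i : Fin m) (j : Fin n) : IsOpen (Vc xs ys h0 h1 g0 g1 i j) := by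
  rw [Vc]
  split_ifs with hc
  · exact (isOpen_lt (Hg0 j |>.comp continuous_fst) (Hh0 i |>.comp continuous_snd)).inter
      (isOpen_lt (Hg1 j |>.comp continuous_fst) (Hh1 i |>.comp continuous_snd))
  · exact (isOpen_lt (Hh0 i |>.comp continuous_snd) (Hg0 j |>.comp continuous_fst)).inter
      (isOpen_lt (Hh1 i |>.comp continuous_snd) (Hg1 j |>.comp continuous_fst))

lemma Ucov_isOpen (Hh0 : ∀ i, Continuous (h0 i)) (Hh1 : ∀ i, Continuous (h1 i))
    (Hg0 : ∀ j, Continuous (g0 j)) (Hg1 : ∀ j, Continuous (g1 j)) (a : Idx m n) : IsOpen (Ucov xs ys h0 h1 g0 g1 a) := by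
  rcases a with - | i | j | ⟨i, j⟩ <;> rw [Ucov]
  · exact (NoX_isOpen xs _).inter (NoY_isOpen ys _)
  · exact (NoX_isOpen xs _).inter (NoY_isOpen ys _)
  · exact (NoX_isOpen xs _).inter (NoY_isOpen ys _)
  · exact ((NoX_isOpen xs _).inter (NoY_isOpen ys _)).inter
      (Vc_isOpen xs ys h0 h1 g0 g1 Hh0 Hh1 Hg0 Hg1 i j)

lemma Ucov_cover (hxs : Function.Injective xs) (hys : Function.Injective ys)
    (cr : ∀ i j, (g0 j (xs i) < h0 i (ys j) ↔ g1 j (xs i) < h1 i (ys j))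
        ∧ g0 j (xs i) ≠ h0 i (ys j) ∧ g1 j (xs i) ≠ h1 i (ys j)) :
    ∀ p : S1 × S1, ∃ a, p ∈ Ucov xs ys h0 h1 g0 g1 a := by
  intro p
  by_cases hx : ∃ i, p.1 = xs i
  · obtain ⟨i, hi⟩ := hx
    have hnx : p ∈ NoX xs {i}ᶜ := by
      intro i' hi' he
      exact (Set.mem_compl_singleton_iff.1 hi') (hxs (he.symm.trans hi))
    by_cases hy : ∃ j, p.2 = ys j
    · obtain ⟨j, hj⟩ := hy
      have hny : p ∈ NoY ys {j}ᶜ := by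
        intro j' hj' he
        exact (Set.mem_compl_singleton_iff.1 hj') (hys (he.symm.trans hj))
      refine ⟨some (Sum.inr (Sum.inr (i, j))), ⟨⟨hnx, hny⟩, ?_⟩⟩
      rw [Vc]
      obtain ⟨criff, crne0, crne1⟩ := cr i j
      split_ifs with hc
      · rw [cAb] at hc
        exact ⟨by simp only [Set.mem_setOf_eq, hi, hj]; exact hc,
          by simp only [Set.mem_setOf_eq, hi, hj]; exact criff.1 hc⟩
      · rw [cAb] at hc
        have hc0 : h0 i (ys j) < g0 j (xs i) :=
          lt_of_le_of_ne (not_lt.1 hc) (Ne.symm crne0)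
        have hc1 : h1 i (ys j) < g1 j (xs i) :=
          lt_of_le_of_ne (not_lt.1 (mt criff.2 hc)) (Ne.symm crne1)
        exact ⟨by simp only [Set.mem_setOf_eq, hi, hj]; exact hc0,
          by simp only [Set.mem_setOf_eq, hi, hj]; exact hc1⟩
    · push_neg at hy
      exact ⟨some (Sum.inl i), ⟨hnx, fun j _ => hy j⟩⟩
  · push_neg at hx
    by_cases hy : ∃ j, p.2 = ys j
    · obtain ⟨j, hj⟩ := hy
      have hny : p ∈ NoY ys {j}ᶜ := by
        intro j' hj' he
        exact (Set.mem_compl_singleton_iff.1 hj') (hys (he.symm.trans hj))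
      exact ⟨some (Sum.inr (Sum.inl j)), ⟨fun i _ => hx i, hny⟩⟩
    · push_neg at hy
      exact ⟨none, ⟨fun i _ => hx i, fun j _ => hy j⟩⟩

lemma vc_pos {i : Fin m} {j : Fin n}
    (Mh0 : ∀ i y, h0 i y ∈ Set.Ioo (0:ℝ) 1) (Mh1 : ∀ i y, h1 i y ∈ Set.Ioo (0:ℝ) 1)
    (Mg0 : ∀ j x, g0 j x ∈ Set.Ioo (0:ℝ) 1) (Mg1 : ∀ j x, g1 j x ∈ Set.Ioo (0:ℝ) 1)
    (hc : cAb xs ys h0 g0 i j) {p : S1 × S1}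
    (hp : p ∈ Vc xs ys h0 h1 g0 g1 i j) (t : ℝ) :
    0 < g0 j p.1 ∧ g0 j p.1 < h0 i p.2 ∧ h0 i p.2 < 1 ∧
    0 < bl (g0 j p.1) (g1 j p.1) t ∧
    bl (g0 j p.1) (g1 j p.1) t < bl (h0 i p.2) (h1 i p.2) t ∧
    bl (h0 i p.2) (h1 i p.2) t < 1 := by
  rw [Vc, if_pos hc] at hp
  obtain ⟨l0, l1⟩ := hp
  exact ⟨(Mg0 j _).1, l0, (Mh0 i _).2, (bl_mem (Mg0 j _) (Mg1 j _) t).1,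
    bl_lt l0 l1 t, (bl_mem (Mh0 i _) (Mh1 i _) t).2⟩

lemma vc_neg {i : Fin m} {j : Fin n}
    (Mh0 : ∀ i y, h0 i y ∈ Set.Ioo (0:ℝ) 1) (Mh1 : ∀ i y, h1 i y ∈ Set.Ioo (0:ℝ) 1)
    (Mg0 : ∀ j x, g0 j x ∈ Set.Ioo (0:ℝ) 1) (Mg1 : ∀ j x, g1 j x ∈ Set.Ioo (0:ℝ) 1)
    (hc : ¬ cAb xs ys h0 g0 i j) {p : S1 × S1}
    (hp : p ∈ Vc xs ys h0 h1 g0 g1 i j) (t : ℝ) :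
    0 < h0 i p.2 ∧ h0 i p.2 < g0 j p.1 ∧ g0 j p.1 < 1 ∧
    0 < bl (h0 i p.2) (h1 i p.2) t ∧
    bl (h0 i p.2) (h1 i p.2) t < bl (g0 j p.1) (g1 j p.1) t ∧
    bl (g0 j p.1) (g1 j p.1) t < 1 := by
  rw [Vc, if_neg hc] at hp
  obtain ⟨l0, l1⟩ := hp
  exact ⟨(Mh0 i _).1, l0, (Mg0 j _).2, (bl_mem (Mh0 i _) (Mh1 i _) t).1,
    bl_lt l0 l1 t, (bl_mem (Mg0 j _) (Mg1 j _) t).2⟩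

section SolProps

variable (Mh0 : ∀ i y, h0 i y ∈ Set.Ioo (0:ℝ) 1) (Mh1 : ∀ i y, h1 i y ∈ Set.Ioo (0:ℝ) 1)
  (Mg0 : ∀ j x, g0 j x ∈ Set.Ioo (0:ℝ) 1) (Mg1 : ∀ j x, g1 j x ∈ Set.Ioo (0:ℝ) 1)
include Mh0 Mh1 Mg0 Mg1

lemma sol_zero (a : Idx m n) (p : S1 × S1) (hp : p ∈ Ucov xs ys h0 h1 g0 g1 a) (t : ℝ) :
    sol xs ys h0 h1 g0 g1 a p t 0 = 0 := by
  rcases a with - | i | j | ⟨i, j⟩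
  · rfl
  · exact mov1_zero (Mh0 i p.2) (bl_mem (Mh0 i p.2) (Mh1 i p.2) t)
  · exact mov1_zero (Mg0 j p.1) (bl_mem (Mg0 j p.1) (Mg1 j p.1) t)
  · by_cases hc : cAb xs ys h0 g0 i j
    · obtain ⟨c1, c2, c3, c4, c5, c6⟩ := vc_pos xs ys h0 h1 g0 g1 Mh0 Mh1 Mg0 Mg1 hc hp.2 t
      simp only [sol, if_pos hc]
      exact mov2_zero c1 c2 c3 c4 c5 c6
    · obtain ⟨c1, c2, c3, c4, c5, c6⟩ := vc_neg xs ys h0 h1 g0 g1 Mh0 Mh1 Mg0 Mg1 hc hp.2 t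
      simp only [sol, if_neg hc]
      exact mov2_zero c1 c2 c3 c4 c5 c6

lemma sol_one (a : Idx m n) (p : S1 × S1) (hp : p ∈ Ucov xs ys h0 h1 g0 g1 a) (t : ℝ) :
    sol xs ys h0 h1 g0 g1 a p t 1 = 1 := by
  rcases a with - | i | j | ⟨i, j⟩
  · rfl
  · exact mov1_one (Mh0 i p.2) (bl_mem (Mh0 i p.2) (Mh1 i p.2) t)
  · exact mov1_one (Mg0 j p.1) (bl_mem (Mg0 j p.1) (Mg1 j p.1) t)
  · by_cases hc : cAb xs ys h0 g0 i j
    · obtain ⟨c1, c2, c3, c4, c5, c6⟩ := vc_pos xs ys h0 h1 g0 g1 Mh0 Mh1 Mg0 Mg1 hc hp.2 t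
      simp only [sol, if_pos hc]
      exact mov2_one c1 c2 c3 c4 c5 c6
    · obtain ⟨c1, c2, c3, c4, c5, c6⟩ := vc_neg xs ys h0 h1 g0 g1 Mh0 Mh1 Mg0 Mg1 hc hp.2 t
      simp only [sol, if_neg hc]
      exact mov2_one c1 c2 c3 c4 c5 c6

lemma sol_id (a : Idx m n) (p : S1 × S1) (hp : p ∈ Ucov xs ys h0 h1 g0 g1 a) (z : ℝ) :
    sol xs ys h0 h1 g0 g1 a p 0 z = z := by
  rcases a with - | i | j | ⟨i, j⟩
  · rfl
  · show mov1 _ (bl _ _ 0) z = z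
    rw [bl_zero]
    exact mov1_id (Mh0 i p.2) z
  · show mov1 _ (bl _ _ 0) z = z
    rw [bl_zero]
    exact mov1_id (Mg0 j p.1) z
  · by_cases hc : cAb xs ys h0 g0 i j
    · obtain ⟨c1, c2, c3, _, _, _⟩ := vc_pos xs ys h0 h1 g0 g1 Mh0 Mh1 Mg0 Mg1 hc hp.2 0
      simp only [sol, if_pos hc]
      rw [bl_zero, bl_zero]
      exact mov2_id c1 c2 c3 z
    · obtain ⟨c1, c2, c3, _, _, _⟩ := vc_neg xs ys h0 h1 g0 g1 Mh0 Mh1 Mg0 Mg1 hc hp.2 0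
      simp only [sol, if_neg hc]
      rw [bl_zero, bl_zero]
      exact mov2_id c1 c2 c3 z

lemma sol_strictMono (a : Idx m n) (p : S1 × S1) (hp : p ∈ Ucov xs ys h0 h1 g0 g1 a) (t : ℝ) :
    StrictMonoOn (sol xs ys h0 h1 g0 g1 a p t) (Set.Icc 0 1) := by
  rcases a with - | i | j | ⟨i, j⟩
  · exact fun z1 _ z2 _ h => h
  · exact mov1_strictMonoOn (Mh0 i p.2) (bl_mem (Mh0 i p.2) (Mh1 i p.2) t)
  · exact mov1_strictMonoOn (Mg0 j p.1) (bl_mem (Mg0 j p.1) (Mg1 j p.1) t)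
  · by_cases hc : cAb xs ys h0 g0 i j
    · obtain ⟨c1, c2, c3, c4, c5, c6⟩ := vc_pos xs ys h0 h1 g0 g1 Mh0 Mh1 Mg0 Mg1 hc hp.2 t
      simp only [sol, if_pos hc]
      exact mov2_strictMonoOn c1 c2 c3 c4 c5 c6
    · obtain ⟨c1, c2, c3, c4, c5, c6⟩ := vc_neg xs ys h0 h1 g0 g1 Mh0 Mh1 Mg0 Mg1 hc hp.2 t
      simp only [sol, if_neg hc]
      exact mov2_strictMonoOn c1 c2 c3 c4 c5 c6

lemma sol_warp (a : Idx m n) (p : S1 × S1) (hp : p ∈ Ucov xs ys h0 h1 g0 g1 a)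
    (i : Fin m) (hpi : p.1 = xs i) (t : ℝ) :
    sol xs ys h0 h1 g0 g1 a p t (h0 i p.2) = bl (h0 i p.2) (h1 i p.2) t := by
  rcases a with - | i' | j | ⟨i', j⟩
  · exact absurd hpi (hp.1 i (Set.mem_univ i))
  · rcases eq_or_ne i' i with rfl | hne
    · exact mov1_self (Mh0 i' p.2) (bl_mem (Mh0 i' p.2) (Mh1 i' p.2) t)
    · exact absurd hpi (hp.1 i (Set.mem_compl_singleton_iff.2 hne.symm))
  · exact absurd hpi (hp.1 i (Set.mem_univ i))
  · rcases eq_or_ne i' i with rfl | hne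
    · by_cases hc : cAb xs ys h0 g0 i' j
      · obtain ⟨c1, c2, c3, c4, c5, c6⟩ := vc_pos xs ys h0 h1 g0 g1 Mh0 Mh1 Mg0 Mg1 hc hp.2 t
        simp only [sol, if_pos hc]
        exact mov2_snd c1 c2 c3 c4 c5 c6
      · obtain ⟨c1, c2, c3, c4, c5, c6⟩ := vc_neg xs ys h0 h1 g0 g1 Mh0 Mh1 Mg0 Mg1 hc hp.2 t
        simp only [sol, if_neg hc]
        exact mov2_fst c1 c2 c3 c4 c5 c6
    · exact absurd hpi (hp.1.1 i (Set.mem_compl_singleton_iff.2 hne.symm))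

lemma sol_weft (a : Idx m n) (p : S1 × S1) (hp : p ∈ Ucov xs ys h0 h1 g0 g1 a)
    (j : Fin n) (hpj : p.2 = ys j) (t : ℝ) :
    sol xs ys h0 h1 g0 g1 a p t (g0 j p.1) = bl (g0 j p.1) (g1 j p.1) t := by
  rcases a with - | i | j' | ⟨i, j'⟩
  · exact absurd hpj (hp.2 j (Set.mem_univ j))
  · exact absurd hpj (hp.2 j (Set.mem_univ j))
  · rcases eq_or_ne j' j with rfl | hne
    · exact mov1_self (Mg0 j' p.1) (bl_mem (Mg0 j' p.1) (Mg1 j' p.1) t)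
    · exact absurd hpj (hp.2 j (Set.mem_compl_singleton_iff.2 hne.symm))
  · rcases eq_or_ne j' j with rfl | hne
    · by_cases hc : cAb xs ys h0 g0 i j'
      · obtain ⟨c1, c2, c3, c4, c5, c6⟩ := vc_pos xs ys h0 h1 g0 g1 Mh0 Mh1 Mg0 Mg1 hc hp.2 t
        simp only [sol, if_pos hc]
        exact mov2_fst c1 c2 c3 c4 c5 c6
      · obtain ⟨c1, c2, c3, c4, c5, c6⟩ := vc_neg xs ys h0 h1 g0 g1 Mh0 Mh1 Mg0 Mg1 hc hp.2 t
        simp only [sol, if_neg hc]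
        exact mov2_snd c1 c2 c3 c4 c5 c6
    · exact absurd hpj (hp.1.2 j (Set.mem_compl_singleton_iff.2 hne.symm))

lemma sol_continuousAt
    (Hh0 : ∀ i, Continuous (h0 i)) (Hh1 : ∀ i, Continuous (h1 i))
    (Hg0 : ∀ j, Continuous (g0 j)) (Hg1 : ∀ j, Continuous (g1 j))
    (a : Idx m n) (w : (S1 × S1) × ℝ × ℝ) (hw : w.1 ∈ Ucov xs ys h0 h1 g0 g1 a) :
    ContinuousAt (fun w : (S1 × S1) × ℝ × ℝ =>
      sol xs ys h0 h1 g0 g1 a w.1 w.2.1 w.2.2) w := by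
  have cz : ContinuousAt (fun w : (S1 × S1) × ℝ × ℝ => w.2.2) w :=
    (continuous_snd.comp continuous_snd).continuousAt
  have ct : ContinuousAt (fun w : (S1 × S1) × ℝ × ℝ => w.2.1) w :=
    (continuous_fst.comp continuous_snd).continuousAt
  have ch0 : ∀ i, ContinuousAt (fun w : (S1 × S1) × ℝ × ℝ => h0 i w.1.2) w :=
    fun i => ((Hh0 i).comp (continuous_snd.comp continuous_fst)).continuousAt
  have ch1 : ∀ i, ContinuousAt (fun w : (S1 × S1) × ℝ × ℝ => h1 i w.1.2) w :=
    fun i => ((Hh1 i).comp (continuous_snd.comp continuous_fst)).continuousAt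
  have cg0 : ∀ j, ContinuousAt (fun w : (S1 × S1) × ℝ × ℝ => g0 j w.1.1) w :=
    fun j => ((Hg0 j).comp (continuous_fst.comp continuous_fst)).continuousAt
  have cg1 : ∀ j, ContinuousAt (fun w : (S1 × S1) × ℝ × ℝ => g1 j w.1.1) w :=
    fun j => ((Hg1 j).comp (continuous_fst.comp continuous_fst)).continuousAt
  have cbh : ∀ i, ContinuousAt
      (fun w : (S1 × S1) × ℝ × ℝ => bl (h0 i w.1.2) (h1 i w.1.2) w.2.1) w := by
    intro i
    exact (continuous_bl ((Hh0 i).comp (continuous_snd.comp continuous_fst))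
      ((Hh1 i).comp (continuous_snd.comp continuous_fst))
      (continuous_fst.comp continuous_snd)).continuousAt
  have cbg : ∀ j, ContinuousAt
      (fun w : (S1 × S1) × ℝ × ℝ => bl (g0 j w.1.1) (g1 j w.1.1) w.2.1) w := by
    intro j
    exact (continuous_bl ((Hg0 j).comp (continuous_fst.comp continuous_fst))
      ((Hg1 j).comp (continuous_fst.comp continuous_fst))
      (continuous_fst.comp continuous_snd)).continuousAt
  rcases a with - | i | j | ⟨i, j⟩
  · exact cz
  · exact mov1_continuousAt (ch0 i) (cbh i) cz (Mh0 i w.1.2)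
      (bl_mem (Mh0 i w.1.2) (Mh1 i w.1.2) w.2.1)
  · exact mov1_continuousAt (cg0 j) (cbg j) cz (Mg0 j w.1.1)
      (bl_mem (Mg0 j w.1.1) (Mg1 j w.1.1) w.2.1)
  · by_cases hc : cAb xs ys h0 g0 i j
    · obtain ⟨c1, c2, c3, c4, c5, c6⟩ :=
        vc_pos xs ys h0 h1 g0 g1 Mh0 Mh1 Mg0 Mg1 hc hw.2 w.2.1
      simp only [sol, if_pos hc]
      exact mov2_continuousAt (cg0 j) (cbg j) (ch0 i) (cbh i) cz c1 c2 c3 c4 c5 c6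
    · obtain ⟨c1, c2, c3, c4, c5, c6⟩ :=
        vc_neg xs ys h0 h1 g0 g1 Mh0 Mh1 Mg0 Mg1 hc hw.2 w.2.1
      simp only [sol, if_neg hc]
      exact mov2_continuousAt (ch0 i) (cbh i) (cg0 j) (cbg j) cz c1 c2 c3 c4 c5 c6

end SolProps

end MainConstruction
lemma main_isotopy {m n : ℕ} (xs : Fin m → S1) (ys : Fin n → S1)
    (h0 h1 : Fin m → S1 → ℝ) (g0 g1 : Fin n → S1 → ℝ)
    (hxs : Function.Injective xs) (hys : Function.Injective ys)
    (Hh0 : ∀ i, Continuous (h0 i)) (Hh1 : ∀ i, Continuous (h1 i))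
    (Hg0 : ∀ j, Continuous (g0 j)) (Hg1 : ∀ j, Continuous (g1 j))
    (Mh0 : ∀ i y, h0 i y ∈ Set.Ioo (0:ℝ) 1) (Mh1 : ∀ i y, h1 i y ∈ Set.Ioo (0:ℝ) 1)
    (Mg0 : ∀ j x, g0 j x ∈ Set.Ioo (0:ℝ) 1) (Mg1 : ∀ j x, g1 j x ∈ Set.Ioo (0:ℝ) 1)
    (cr : ∀ i j, (g0 j (xs i) < h0 i (ys j) ↔ g1 j (xs i) < h1 i (ys j))
        ∧ g0 j (xs i) ≠ h0 i (ys j) ∧ g1 j (xs i) ≠ h1 i (ys j)) :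
    Isotopic ((⋃ i, grW (xs i) (h0 i)) ∪ ⋃ j, grF (ys j) (g0 j))
      ((⋃ i, grW (xs i) (h1 i)) ∪ ⋃ j, grF (ys j) (g1 j)) := by
  classical
  obtain ⟨f, hf⟩ := PartitionOfUnity.exists_isSubordinate
    (s := (Set.univ : Set (S1 × S1))) isClosed_univ (Ucov xs ys h0 h1 g0 g1)
    (Ucov_isOpen xs ys h0 h1 g0 g1 Hh0 Hh1 Hg0 Hg1)
    (fun p _ => Set.mem_iUnion.2 (Ucov_cover xs ys h0 h1 g0 g1 hxs hys cr p))
  set Φ : (S1 × S1) → ℝ → ℝ → ℝ :=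
    fun p t z => ∑ a : Idx m n, f a p * sol xs ys h0 h1 g0 g1 a p t z with hΦ
  have hsum1 : ∀ p : S1 × S1, ∑ a : Idx m n, f a p = 1 := fun p => by
    rw [← finsum_eq_sum_of_fintype]; exact f.sum_eq_one (Set.mem_univ p)
  have hact : ∀ (a : Idx m n) (p : S1 × S1), f a p ≠ 0 → p ∈ Ucov xs ys h0 h1 g0 g1 a :=
    fun a p h => hf a (subset_closure (Function.mem_support.2 h))
  have hnn : ∀ (a : Idx m n) (p : S1 × S1), 0 ≤ f a p := fun a p => f.nonneg a p
  have hcongr : ∀ (p : S1 × S1) (t z v : ℝ),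
      (∀ a, p ∈ Ucov xs ys h0 h1 g0 g1 a → sol xs ys h0 h1 g0 g1 a p t z = v) →
      Φ p t z = v := by
    intro p t z v hv
    have key : ∀ a : Idx m n, f a p * sol xs ys h0 h1 g0 g1 a p t z = f a p * v := by
      intro a
      rcases eq_or_ne (f a p) 0 with h | h
      · rw [h, zero_mul, zero_mul]
      · rw [hv a (hact a p h)]
    rw [hΦ]
    simp only
    rw [Finset.sum_congr rfl (fun a _ => key a), ← Finset.sum_mul, hsum1, one_mul]
  have hzero : ∀ p t, Φ p t 0 = 0 := fun p t =>
    hcongr p t 0 0 (fun a hp => sol_zero xs ys h0 h1 g0 g1 Mh0 Mh1 Mg0 Mg1 a p hp t)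
  have hone : ∀ p t, Φ p t 1 = 1 := fun p t =>
    hcongr p t 1 1 (fun a hp => sol_one xs ys h0 h1 g0 g1 Mh0 Mh1 Mg0 Mg1 a p hp t)
  have hid : ∀ p z, Φ p 0 z = z := fun p z =>
    hcongr p 0 z z (fun a hp => sol_id xs ys h0 h1 g0 g1 Mh0 Mh1 Mg0 Mg1 a p hp z)
  have hwarp : ∀ (p : S1 × S1) (i : Fin m), p.1 = xs i → ∀ t,
      Φ p t (h0 i p.2) = bl (h0 i p.2) (h1 i p.2) t := fun p i hpi t =>
    hcongr p t _ _ (fun a hp => sol_warp xs ys h0 h1 g0 g1 Mh0 Mh1 Mg0 Mg1 a p hp i hpi t)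
  have hweft : ∀ (p : S1 × S1) (j : Fin n), p.2 = ys j → ∀ t,
      Φ p t (g0 j p.1) = bl (g0 j p.1) (g1 j p.1) t := fun p j hpj t =>
    hcongr p t _ _ (fun a hp => sol_weft xs ys h0 h1 g0 g1 Mh0 Mh1 Mg0 Mg1 a p hp j hpj t)
  have hmono : ∀ p t, StrictMonoOn (Φ p t) (Set.Icc 0 1) := by
    intro p t z1 hz1 z2 hz2 hlt
    have hex : ∃ a : Idx m n, f a p ≠ 0 := by
      by_contra h
      push_neg at h
      have h2 := hsum1 p
      rw [Finset.sum_eq_zero (fun a _ => h a)] at h2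
      norm_num at h2
    obtain ⟨a0, ha0⟩ := hex
    apply Finset.sum_lt_sum
    · intro a _
      rcases eq_or_ne (f a p) 0 with h | h
      · rw [h, zero_mul, zero_mul]
      · exact mul_le_mul_of_nonneg_left
          ((sol_strictMono xs ys h0 h1 g0 g1 Mh0 Mh1 Mg0 Mg1 a p (hact a p h) t
            hz1 hz2 hlt).le) (hnn a p)
    · exact ⟨a0, Finset.mem_univ a0,
        mul_lt_mul_of_pos_left
          (sol_strictMono xs ys h0 h1 g0 g1 Mh0 Mh1 Mg0 Mg1 a0 p (hact a0 p ha0) t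
            hz1 hz2 hlt)
          (lt_of_le_of_ne (hnn a0 p) (Ne.symm ha0))⟩
  have hmem : ∀ p t z, z ∈ Set.Icc (0:ℝ) 1 → Φ p t z ∈ Set.Icc (0:ℝ) 1 := by
    intro p t z hz
    have m1 := (hmono p t).monotoneOn (Set.left_mem_Icc.2 zero_le_one) hz hz.1
    have m2 := (hmono p t).monotoneOn hz (Set.right_mem_Icc.2 zero_le_one) hz.2
    rw [hzero p t] at m1
    rw [hone p t] at m2
    exact ⟨m1, m2⟩
  have hcont : Continuous (fun w : (S1 × S1) × ℝ × ℝ => Φ w.1 w.2.1 w.2.2) := by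
    rw [hΦ]
    simp only
    apply continuous_finset_sum
    intro a _
    rw [continuous_iff_continuousAt]
    intro w
    by_cases hw : w.1 ∈ Ucov xs ys h0 h1 g0 g1 a
    · exact (((f a).continuous.comp continuous_fst).continuousAt).mul
        (sol_continuousAt xs ys h0 h1 g0 g1 Mh0 Mh1 Mg0 Mg1 Hh0 Hh1 Hg0 Hg1 a w hw)
    · have hw' : w.1 ∉ tsupport ⇑(f a) := fun h => hw (hf a h)
      have hopen : IsOpen {w' : (S1 × S1) × ℝ × ℝ | w'.1 ∉ tsupport ⇑(f a)} :=
        (isClosed_tsupport _).isOpen_compl.preimage continuous_fst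
      have hev : (fun w' : (S1 × S1) × ℝ × ℝ =>
          f a w'.1 * sol xs ys h0 h1 g0 g1 a w'.1 w'.2.1 w'.2.2) =ᶠ[nhds w]
          (fun _ => (0:ℝ)) := by
        filter_upwards [hopen.mem_nhds hw'] with w' hw''
        rw [image_eq_zero_of_notMem_tsupport hw'', zero_mul]
      exact continuousAt_const.congr hev.symm
  set F : Thick × I → Thick := fun qt => (qt.1.1, qt.1.2.1,
      ⟨Φ (qt.1.1, qt.1.2.1) qt.2 qt.1.2.2, hmem _ _ _ qt.1.2.2.2⟩) with hFdef
  have hcontF : Continuous F := by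
    apply Continuous.prodMk (continuous_fst.comp continuous_fst)
    apply Continuous.prodMk (continuous_fst.comp (continuous_snd.comp continuous_fst))
    apply Continuous.subtype_mk
    exact hcont.comp (Continuous.prodMk
      (Continuous.prodMk (continuous_fst.comp continuous_fst)
        (continuous_fst.comp (continuous_snd.comp continuous_fst)))
      (Continuous.prodMk (continuous_subtype_val.comp continuous_snd)
        (continuous_subtype_val.comp (continuous_snd.comp (continuous_snd.comp
          continuous_fst)))))
  refine ⟨F, hcontF, ?_, ?_, ?_⟩
  · -- each time slice is a homeomorphism
    intro t
    rw [isHomeomorph_iff_continuous_bijective]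
    refine ⟨hcontF.comp (continuous_id.prodMk continuous_const), ?_, ?_⟩
    · intro q q' he
      simp only [hFdef, Prod.mk.injEq, Subtype.mk.injEq] at he
      obtain ⟨e1, e2, e3⟩ := he
      rw [← e1, ← e2] at e3
      have e4 := (hmono (q.1, q.2.1) t).injOn q.2.2.2 q'.2.2.2 e3
      exact Prod.ext e1 (Prod.ext e2 (Subtype.ext e4))
    · intro q
      have hzc : Continuous fun z : ℝ => Φ (q.1, q.2.1) (t : ℝ) z :=
        hcont.comp (Continuous.prodMk continuous_const
          (Continuous.prodMk continuous_const continuous_id))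
      have hsub := intermediate_value_Icc zero_le_one hzc.continuousOn
      rw [hzero, hone] at hsub
      obtain ⟨z, hz, hze⟩ := hsub q.2.2.2
      exact ⟨(q.1, q.2.1, ⟨z, hz⟩), Prod.ext rfl (Prod.ext rfl (Subtype.ext hze))⟩
  · -- identity at time 0
    intro q
    exact Prod.ext rfl (Prod.ext rfl (Subtype.ext (hid (q.1, q.2.1) q.2.2)))
  · -- image at time 1
    have himW : ∀ i, (fun q => F (q, 1)) '' grW (xs i) (h0 i) = grW (xs i) (h1 i) := by
      intro i
      ext q
      constructor
      · rintro ⟨q', ⟨hq1, hq2⟩, rfl⟩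
        refine ⟨hq1, ?_⟩
        show Φ (q'.1, q'.2.1) ((1:I) : ℝ) (q'.2.2 : ℝ) = h1 i q'.2.1
        rw [hq2]
        have hw := hwarp (q'.1, q'.2.1) i hq1 1
        rw [bl_one] at hw
        exact hw
      · rintro ⟨hq1, hq2⟩
        refine ⟨(q.1, q.2.1, ⟨h0 i q.2.1, Set.Ioo_subset_Icc_self (Mh0 i q.2.1)⟩),
          ⟨hq1, rfl⟩, ?_⟩
        refine Prod.ext rfl (Prod.ext rfl (Subtype.ext ?_))
        show Φ (q.1, q.2.1) ((1:I) : ℝ) (h0 i q.2.1) = (q.2.2 : ℝ)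
        rw [hq2]
        have hw := hwarp (q.1, q.2.1) i hq1 1
        rw [bl_one] at hw
        exact hw
    have himF : ∀ j, (fun q => F (q, 1)) '' grF (ys j) (g0 j) = grF (ys j) (g1 j) := by
      intro j
      ext q
      constructor
      · rintro ⟨q', ⟨hq1, hq2⟩, rfl⟩
        refine ⟨hq1, ?_⟩
        show Φ (q'.1, q'.2.1) ((1:I) : ℝ) (q'.2.2 : ℝ) = g1 j q'.1
        rw [hq2]
        have hw := hweft (q'.1, q'.2.1) j hq1 1
        rw [bl_one] at hw
        exact hw
      · rintro ⟨hq1, hq2⟩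
        refine ⟨(q.1, q.2.1, ⟨g0 j q.1, Set.Ioo_subset_Icc_self (Mg0 j q.1)⟩),
          ⟨hq1, rfl⟩, ?_⟩
        refine Prod.ext rfl (Prod.ext rfl (Subtype.ext ?_))
        show Φ (q.1, q.2.1) ((1:I) : ℝ) (g0 j q.1) = (q.2.2 : ℝ)
        rw [hq2]
        have hw := hweft (q.1, q.2.1) j hq1 1
        rw [bl_one] at hw
        exact hw
    rw [Set.image_union, Set.image_iUnion, Set.image_iUnion]
    exact congrArg₂ (· ∪ ·) (Set.iUnion_congr himW) (Set.iUnion_congr himF)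
/-- standard warp coordinates -/
def stdx (m : ℕ) (i : Fin m) : S1 := ((((2 * (i : ℕ) + 1 : ℝ)) / (2 * (m : ℝ)) : ℝ) : S1)

/-- standard weft coordinates -/
def stdy (n : ℕ) (j : Fin n) : S1 := ((((2 * (j : ℕ) + 1 : ℝ)) / (2 * (n : ℝ)) : ℝ) : S1)

lemma std_mem_Ico (m : ℕ) (i : Fin m) :
    ((2 * (i : ℕ) + 1 : ℝ)) / (2 * (m : ℝ)) ∈ Set.Ico (0:ℝ) (0 + 1) := by
  have hm : 0 < m := i.pos
  have hmr : (0:ℝ) < m := by exact_mod_cast hm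
  constructor
  · positivity
  · rw [zero_add, div_lt_one (by positivity)]
    have hi : ((i : ℕ) : ℝ) + 1 ≤ m := by exact_mod_cast i.2
    linarith

lemma stdx_inj (m : ℕ) : Function.Injective (stdx m) := by
  intro i i' he
  have hm : 0 < m := i.pos
  have hmr : (0:ℝ) < m := by exact_mod_cast hm
  have h2 := (AddCircle.coe_eq_coe_iff_of_mem_Ico
    (std_mem_Ico m i) (std_mem_Ico m i')).1 he
  field_simp at h2
  exact Fin.ext (by have h3 : ((i : ℕ) : ℝ) = ((i' : ℕ) : ℝ) := by linarith
                    exact_mod_cast h3)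

lemma stdy_inj (n : ℕ) : Function.Injective (stdy n) := stdx_inj n
/-- Two `m × n`-weaves in standard position with the same weaving
diagram are isotopic links in `T² × I`. -/
theorem isotopic_of_same_diagram {m n : ℕ} (W0 W1 : Weave m n)
    (h0 : StdPos W0) (h1 : StdPos W1)
    (h : ∀ (i : Fin m) (j : Fin n),
      Above (W0.warp i) (W0.weft j) ↔ Above (W1.warp i) (W1.weft j)) :
    Isotopic W0.carrier W1.carrier := by
  have E0w := fun i => isWarp_graph (W0.warp_isWarp i) (x := stdx m i)
    (fun q hq => h0.1 i q hq)
  choose h0f h0cont h0mem h0eq using E0w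
  have E0f := fun j => isWeft_graph (W0.weft_isWeft j) (y := stdy n j)
    (fun q hq => h0.2 j q hq)
  choose g0f g0cont g0mem g0eq using E0f
  have E1w := fun i => isWarp_graph (W1.warp_isWarp i) (x := stdx m i)
    (fun q hq => h1.1 i q hq)
  choose h1f h1cont h1mem h1eq using E1w
  have E1f := fun j => isWeft_graph (W1.weft_isWeft j) (y := stdy n j)
    (fun q hq => h1.2 j q hq)
  choose g1f g1cont g1mem g1eq using E1f
  have hc0 : W0.carrier = (⋃ i, grW (stdx m i) (h0f i)) ∪ ⋃ j, grF (stdy n j) (g0f j) := by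
    rw [Weave.carrier]
    exact congrArg₂ (· ∪ ·) (Set.iUnion_congr h0eq) (Set.iUnion_congr g0eq)
  have hc1 : W1.carrier = (⋃ i, grW (stdx m i) (h1f i)) ∪ ⋃ j, grF (stdy n j) (g1f j) := by
    rw [Weave.carrier]
    exact congrArg₂ (· ∪ ·) (Set.iUnion_congr h1eq) (Set.iUnion_congr g1eq)
  have hd0 : ∀ i j, g0f j (stdx m i) ≠ h0f i (stdy n j) := by
    intro i j heq
    have hdisj : Disjoint (W0.warp i) (W0.weft j) :=
      W0.disj (show (Sum.inl i : Fin m ⊕ Fin n) ≠ Sum.inr j by simp)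
    set q : Thick := (stdx m i, stdy n j,
      ⟨h0f i (stdy n j), Set.Ioo_subset_Icc_self (h0mem i _)⟩) with hqdef
    have hq1 : q ∈ W0.warp i := by
      rw [h0eq i]; exact ⟨rfl, rfl⟩
    have hq2 : q ∈ W0.weft j := by
      rw [g0eq j]; exact ⟨rfl, heq.symm⟩
    exact Set.disjoint_left.1 hdisj hq1 hq2
  have hd1 : ∀ i j, g1f j (stdx m i) ≠ h1f i (stdy n j) := by
    intro i j heq
    have hdisj : Disjoint (W1.warp i) (W1.weft j) :=
      W1.disj (show (Sum.inl i : Fin m ⊕ Fin n) ≠ Sum.inr j by simp)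
    set q : Thick := (stdx m i, stdy n j,
      ⟨h1f i (stdy n j), Set.Ioo_subset_Icc_self (h1mem i _)⟩) with hqdef
    have hq1 : q ∈ W1.warp i := by
      rw [h1eq i]; exact ⟨rfl, rfl⟩
    have hq2 : q ∈ W1.weft j := by
      rw [g1eq j]; exact ⟨rfl, heq.symm⟩
    exact Set.disjoint_left.1 hdisj hq1 hq2
  have cr : ∀ i j, (g0f j (stdx m i) < h0f i (stdy n j) ↔ g1f j (stdx m i) < h1f i (stdy n j))
      ∧ g0f j (stdx m i) ≠ h0f i (stdy n j) ∧ g1f j (stdx m i) ≠ h1f i (stdy n j) := by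
    intro i j
    have hab0 : Above (W0.warp i) (W0.weft j) ↔ g0f j (stdx m i) < h0f i (stdy n j) := by
      rw [h0eq i, g0eq j]; exact above_gr (h0mem i) (g0mem j)
    have hab1 : Above (W1.warp i) (W1.weft j) ↔ g1f j (stdx m i) < h1f i (stdy n j) := by
      rw [h1eq i, g1eq j]; exact above_gr (h1mem i) (g1mem j)
    exact ⟨by rw [← hab0, ← hab1]; exact h i j, hd0 i j, hd1 i j⟩
  rw [hc0, hc1]
  exact main_isotopy _ _ _ _ _ _ (stdx_inj m) (stdy_inj n) h0cont h1cont g0cont g1cont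
    h0mem h1mem g0mem g1mem cr
end
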